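/- arXiv:1602.07568 — 2 statements merged into one kernel-verified Lean document; each statement's English description precedes it below -/
import Mathlib

section
/- Let A be an n×n real symmetric matrix with positive diagonal entries, and let S be a nonempty proper subset of indices. Suppose: (i) A i i > r_i^S(A) for all i ∈ S; (ii) A i i > r_i^{S̄}(A) for all i ∈ S̄; (iii) for all i ∈ S, j ∈ S̄, either (A i i - r_i^S(A))(A j j - r_j^{S̄}(A)) > r_i^{S̄}(A) r_j^S(A) or A i i > r_i(A); (iv) for all i ∈ S̄, j ∈ S, either (A i i - r_i^{S̄}(A))(A j j - r_j^S(A)) > r_i^S(A) r_j^{S̄}(A) or A i i > r_i(A). Then A is positive definite. -/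
open Matrix


/-- `r_i^T(A) = ∑_{j ∈ T, j ≠ i} |A i j|` for a real matrix. -/
def rT {n : ℕ} (A : Matrix (Fin n) (Fin n) ℝ) (T : Finset (Fin n)) (i : Fin n) : ℝ :=
  ∑ j ∈ T.erase i, |A i j|

lemma rT_nonneg {n : ℕ} (A : Matrix (Fin n) (Fin n) ℝ) (T : Finset (Fin n)) (i : Fin n) :
    0 ≤ rT A T i := Finset.sum_nonneg fun j _ => abs_nonneg _

-- key: "S-SDD"-style matrices have trivial kernel
lemma key {n : ℕ} (B : Matrix (Fin n) (Fin n) ℝ)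
    (S : Finset (Fin n)) (hS : S.Nonempty) (hSc : Sᶜ.Nonempty)
    (h1 : ∀ i ∈ S, rT B S i < B i i)
    (h2 : ∀ i ∈ Sᶜ, rT B Sᶜ i < B i i)
    (h3 : ∀ i ∈ S, ∀ j ∈ Sᶜ,
      rT B Sᶜ i * rT B S j < (B i i - rT B S i) * (B j j - rT B Sᶜ j) ∨
      rT B S i + rT B Sᶜ i < B i i)
    (h4 : ∀ i ∈ Sᶜ, ∀ j ∈ S,
      rT B S i * rT B Sᶜ j < (B i i - rT B Sᶜ i) * (B j j - rT B S j) ∨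
      rT B S i + rT B Sᶜ i < B i i)
    (x : Fin n → ℝ) (hx : B *ᵥ x = 0) : x = 0 := by
  by_contra hx0
  obtain ⟨p, hpS, hp⟩ := S.exists_max_image (fun i => |x i|) hS
  obtain ⟨q, hqS, hq⟩ := Sᶜ.exists_max_image (fun i => |x i|) hSc
  set m := |x p| with hm
  set M := |x q| with hM
  have hmn : 0 ≤ m := abs_nonneg _
  have hMn : 0 ≤ M := abs_nonneg _
  -- row inequality
  have row : ∀ i : Fin n, B i i * |x i| ≤ ∑ j ∈ Finset.univ.erase i, |B i j| * |x j| := by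
    intro i
    have h0 : ∑ j, B i j * x j = 0 := congrFun hx i
    have h0'' : ∑ j ∈ Finset.univ.erase i, B i j * x j + B i i * x i = 0 := by
      rw [Finset.sum_erase_add _ _ (Finset.mem_univ i)]; exact h0
    have h0' : B i i * x i = -∑ j ∈ Finset.univ.erase i, B i j * x j := by linarith
    calc B i i * |x i| ≤ |B i i * x i| := by rw [abs_mul]; exact mul_le_mul_of_nonneg_right (le_abs_self _) (abs_nonneg _)
      _ = |∑ j ∈ Finset.univ.erase i, B i j * x j| := by rw [h0', abs_neg]
      _ ≤ ∑ j ∈ Finset.univ.erase i, |B i j * x j| := Finset.abs_sum_le_sum_abs _ _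
      _ = ∑ j ∈ Finset.univ.erase i, |B i j| * |x j| := by simp [abs_mul]
  -- split the sum for i ∈ S
  have splitS : ∀ i ∈ S, B i i * |x i| ≤ rT B S i * m + rT B Sᶜ i * M := by
    intro i hi
    refine (row i).trans ?_
    have hsplit : Finset.univ.erase i = (S.erase i) ∪ Sᶜ := by
      ext j
      simp only [Finset.mem_erase, Finset.mem_union, Finset.mem_compl, Finset.mem_univ, and_true]
      constructor
      · intro hji
        by_cases hj : j ∈ S
        · exact Or.inl ⟨hji, hj⟩
        · exact Or.inr hj
      · rintro (⟨hji, _⟩ | hj)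
        · exact hji
        · exact fun hji => hj (hji ▸ hi)
    rw [hsplit, Finset.sum_union]
    · refine add_le_add ?_ ?_
      · rw [rT, Finset.sum_mul]
        exact Finset.sum_le_sum fun j hj =>
          mul_le_mul_of_nonneg_left (hp j (Finset.mem_of_mem_erase hj)) (abs_nonneg _)
      · rw [rT, Finset.erase_eq_of_notMem (by simp [hi]), Finset.sum_mul]
        exact Finset.sum_le_sum fun j hj => mul_le_mul_of_nonneg_left (hq j hj) (abs_nonneg _)
    · exact Finset.disjoint_left.2 fun j hj hj' => (Finset.mem_compl.1 hj') (Finset.mem_of_mem_erase hj)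
  have splitSc : ∀ i ∈ Sᶜ, B i i * |x i| ≤ rT B Sᶜ i * M + rT B S i * m := by
    intro i hi
    refine (row i).trans ?_
    have hsplit : Finset.univ.erase i = (Sᶜ.erase i) ∪ S := by
      ext j
      simp only [Finset.mem_erase, Finset.mem_union, Finset.mem_compl, Finset.mem_univ, and_true]
      constructor
      · intro hji
        by_cases hj : j ∈ S
        · exact Or.inr hj
        · exact Or.inl ⟨hji, hj⟩
      · rintro (⟨hji, _⟩ | hj)
        · exact hji
        · exact fun hji => (Finset.mem_compl.1 hi) (hji ▸ hj)
    rw [hsplit, Finset.sum_union]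
    · refine add_le_add ?_ ?_
      · rw [rT, Finset.sum_mul]
        exact Finset.sum_le_sum fun j hj =>
          mul_le_mul_of_nonneg_left (hq j (Finset.mem_of_mem_erase hj)) (abs_nonneg _)
      · rw [rT, Finset.erase_eq_of_notMem (fun h => (Finset.mem_compl.1 hi) h), Finset.sum_mul]
        exact Finset.sum_le_sum fun j hj => mul_le_mul_of_nonneg_left (hp j hj) (abs_nonneg _)
    · exact Finset.disjoint_left.2 fun j hj hj' => (Finset.mem_compl.1 (Finset.mem_of_mem_erase hj)) hj'
  -- the two key inequalities
  have ha : (B p p - rT B S p) * m ≤ rT B Sᶜ p * M := by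
    have := splitS p hpS
    nlinarith [this]
  have hb : (B q q - rT B Sᶜ q) * M ≤ rT B S q * m := by
    have := splitSc q hqS
    nlinarith [this]
  have hBp : 0 < B p p - rT B S p := sub_pos.2 (h1 p hpS)
  have hBq : 0 < B q q - rT B Sᶜ q := sub_pos.2 (h2 q hqS)
  -- not both zero
  have hmM : 0 < m ∨ 0 < M := by
    obtain ⟨k, hk⟩ := Function.ne_iff.1 hx0
    have hk' : 0 < |x k| := abs_pos.2 hk
    by_cases hkS : k ∈ S
    · exact Or.inl (lt_of_lt_of_le hk' (hp k hkS))
    · exact Or.inr (lt_of_lt_of_le hk' (hq k (Finset.mem_compl.2 hkS)))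
  have hMpos : 0 < M := by
    rcases hmM with h | h
    · by_contra hM0
      have : M = 0 := le_antisymm (not_lt.1 hM0) hMn
      rw [this] at ha
      nlinarith
    · exact h
  have hmpos : 0 < m := by
    by_contra hm0
    have : m = 0 := le_antisymm (not_lt.1 hm0) hmn
    rw [this] at hb
    nlinarith
  -- product inequality derived
  have hprod : (B p p - rT B S p) * (B q q - rT B Sᶜ q) ≤ rT B Sᶜ p * rT B S q := by
    have h' : ((B p p - rT B S p) * m) * ((B q q - rT B Sᶜ q) * M) ≤
        (rT B Sᶜ p * M) * (rT B S q * m) := by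
      refine mul_le_mul ha hb (by positivity) ?_
      exact mul_nonneg (rT_nonneg _ _ _) hMn
    have h'' : ((B p p - rT B S p) * (B q q - rT B Sᶜ q)) * (m * M) ≤
        (rT B Sᶜ p * rT B S q) * (m * M) := by ring_nf; ring_nf at h'; linarith
    exact le_of_mul_le_mul_right h'' (mul_pos hmpos hMpos)
  rcases h3 p hpS q hqS with hc1 | hc1
  · exact absurd hprod (not_le.2 hc1)
  rcases h4 q hqS p hpS with hc2 | hc2
  · rw [mul_comm (rT B S q), mul_comm (B q q - rT B Sᶜ q)] at hc2
    exact absurd hprod (not_le.2 hc2)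
  -- both SDD cases: m < M and M < m
  have hmM1 : m < M := by
    have h5 : rT B Sᶜ p < B p p - rT B S p := by linarith
    have : (B p p - rT B S p) * m < (B p p - rT B S p) * M :=
      lt_of_le_of_lt ha (by nlinarith)
    exact lt_of_mul_lt_mul_left this hBp.le
  have hmM2 : M < m := by
    have h5 : rT B S q < B q q - rT B Sᶜ q := by linarith
    have : (B q q - rT B Sᶜ q) * M < (B q q - rT B Sᶜ q) * m :=
      lt_of_le_of_lt hb (by nlinarith)
    exact lt_of_mul_lt_mul_left this hBq.le
  exact absurd hmM1 (not_lt.2 hmM2.le)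

lemma rT_sub_smul_one {n : ℕ} (A : Matrix (Fin n) (Fin n) ℝ) (c : ℝ) (T : Finset (Fin n))
    (i : Fin n) : rT (A - c • (1 : Matrix (Fin n) (Fin n) ℝ)) T i = rT A T i := by
  refine Finset.sum_congr rfl fun j hj => ?_
  have h1 : (1 : Matrix (Fin n) (Fin n) ℝ) i j = 0 :=
    Matrix.one_apply_ne (Ne.symm (Finset.ne_of_mem_erase hj))
  simp [Matrix.sub_apply, h1]

theorem stmt_6 {n : ℕ} (hn : 2 ≤ n) (A : Matrix (Fin n) (Fin n) ℝ) (hsym : A.IsSymm)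
    (hdiag : ∀ k, 0 < A k k)
    (S : Finset (Fin n)) (hS : S.Nonempty) (hSc : Sᶜ.Nonempty)
    (h1 : ∀ i ∈ S, rT A S i < A i i)
    (h2 : ∀ i ∈ Sᶜ, rT A Sᶜ i < A i i)
    (h3 : ∀ i ∈ S, ∀ j ∈ Sᶜ,
      rT A Sᶜ i * rT A S j < (A i i - rT A S i) * (A j j - rT A Sᶜ j) ∨
      rT A S i + rT A Sᶜ i < A i i)
    (h4 : ∀ i ∈ Sᶜ, ∀ j ∈ S,
      rT A S i * rT A Sᶜ j < (A i i - rT A Sᶜ i) * (A j j - rT A S j) ∨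
      rT A S i + rT A Sᶜ i < A i i) :
    A.PosDef := by
  classical
  have hA : A.IsHermitian := by
    ext i j
    simp only [Matrix.conjTranspose_apply, star_trivial]
    exact hsym.apply i j
  have heig : ∀ i, 0 < hA.eigenvalues i := by
    intro i
    by_contra hle
    push_neg at hle
    set c := hA.eigenvalues i with hc
    set B := A - c • (1 : Matrix (Fin n) (Fin n) ℝ) with hB
    have hdiagB : ∀ k, B k k = A k k - c := by
      intro k; simp [hB, Matrix.one_apply]
    have hAle : ∀ k, A k k ≤ B k k := fun k => by rw [hdiagB]; linarith
    have h1' : ∀ j ∈ S, rT B S j < B j j := fun j hj => by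
      rw [hB, rT_sub_smul_one]; exact lt_of_lt_of_le (h1 j hj) (hAle j)
    have h2' : ∀ j ∈ Sᶜ, rT B Sᶜ j < B j j := fun j hj => by
      rw [hB, rT_sub_smul_one]; exact lt_of_lt_of_le (h2 j hj) (hAle j)
    have h3' : ∀ j ∈ S, ∀ k ∈ Sᶜ,
        rT B Sᶜ j * rT B S k < (B j j - rT B S j) * (B k k - rT B Sᶜ k) ∨
        rT B S j + rT B Sᶜ j < B j j := by
      intro j hj k hk
      rcases h3 j hj k hk with hlt | hlt
      · left
        rw [hB, rT_sub_smul_one, rT_sub_smul_one, rT_sub_smul_one, rT_sub_smul_one]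
        refine hlt.trans_le (mul_le_mul (by linarith [hAle j]) (by linarith [hAle k])
          (by linarith [h2 k hk]) (by linarith [hAle j, h1 j hj]))
      · right
        rw [hB, rT_sub_smul_one, rT_sub_smul_one]
        linarith [hAle j]
    have h4' : ∀ j ∈ Sᶜ, ∀ k ∈ S,
        rT B S j * rT B Sᶜ k < (B j j - rT B Sᶜ j) * (B k k - rT B S k) ∨
        rT B S j + rT B Sᶜ j < B j j := by
      intro j hj k hk
      rcases h4 j hj k hk with hlt | hlt
      · left
        rw [hB, rT_sub_smul_one, rT_sub_smul_one, rT_sub_smul_one, rT_sub_smul_one]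
        refine hlt.trans_le (mul_le_mul (by linarith [hAle j]) (by linarith [hAle k])
          (by linarith [h1 k hk]) (by linarith [hAle j, h2 j hj]))
      · right
        rw [hB, rT_sub_smul_one, rT_sub_smul_one]
        linarith [hAle j]
    have hv0 : B *ᵥ ⇑(hA.eigenvectorBasis i) = 0 := by
      rw [hB, Matrix.sub_mulVec, hA.mulVec_eigenvectorBasis, Matrix.smul_mulVec,
        Matrix.one_mulVec]
      simp [hc]
    have hv := key B S hS hSc h1' h2' h3' h4' _ hv0
    exact (hA.eigenvectorBasis).toBasis.ne_zero i (by ext j; exact congrFun hv j)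
  have hD : (Matrix.diagonal (RCLike.ofReal ∘ hA.eigenvalues) :
      Matrix (Fin n) (Fin n) ℝ).PosDef := by
    rw [Matrix.posDef_diagonal_iff]
    intro k; simpa using heig k
  refine Matrix.posDef_iff_dotProduct_mulVec.2 ⟨hA, fun x hx => ?_⟩
  set U := (hA.eigenvectorUnitary : Matrix (Fin n) (Fin n) ℝ) with hU
  have hy : star U *ᵥ x ≠ 0 := by
    intro h
    apply hx
    have h2 := congrArg (U *ᵥ ·) h
    simpa [Matrix.mulVec_mulVec, show U * star U = 1 from Unitary.mul_star_self_of_mem hA.eigenvectorUnitary.2]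
      using h2
  have hpos := hD.dotProduct_mulVec_pos hy
  have hAeq := hA.spectral_theorem
  rw [hAeq, Unitary.conjStarAlgAut_apply]
  simpa only [Matrix.star_mulVec, Matrix.dotProduct_mulVec, Matrix.vecMul_vecMul,
    Matrix.star_eq_conjTranspose, Matrix.conjTranspose_conjTranspose] using hpos
end

section
/- Let A be an n×n real symmetric matrix with nonnegative diagonal entries, and let S be a nonempty proper subset of indices. Suppose: (i) A i i ≥ r_i^S(A) for all i ∈ S; (ii) A i i ≥ r_i^{S̄}(A) for all i ∈ S̄; (iii) for all i ∈ S, j ∈ S̄, either (A i i - r_i^S(A))(A j j - r_j^{S̄}(A)) ≥ r_i^{S̄}(A) r_j^S(A) or A i i ≥ r_i(A); (iv) for all i ∈ S̄, j ∈ S, either (A i i - r_i^{S̄}(A))(A j j - r_j^S(A)) ≥ r_i^S(A) r_j^{S̄}(A) or A i i ≥ r_i(A). Then A is positive semidefinite. -/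
lemma row_ineq {n : ℕ} (A : Matrix (Fin n) (Fin n) ℝ)
    (S : Finset (Fin n)) (lam : ℝ) (v : Fin n → ℝ)
    (heig : A.mulVec v = lam • v) (i : Fin n) (MS Mc : ℝ)
    (hMS : ∀ p ∈ S, |v p| ≤ MS) (hMc : ∀ p ∈ Sᶜ, |v p| ≤ Mc) :
    (A i i - lam) * |v i| ≤ rT A S i * MS + rT A Sᶜ i * Mc := by
  have hrow : ∑ p, A i p * v p = lam * v i := by
    have := congrFun heig i
    simpa [Matrix.mulVec, dotProduct] using this
  have hsplit : (Finset.univ : Finset (Fin n)).erase i = (S.erase i) ∪ (Sᶜ.erase i) := by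
    ext p; simp [Finset.mem_erase]; tauto
  have hdisj : Disjoint (S.erase i) (Sᶜ.erase i) := by
    apply Finset.disjoint_left.mpr
    intro p hp hq
    exact (Finset.mem_compl.mp (Finset.mem_of_mem_erase hq)) (Finset.mem_of_mem_erase hp)
  have key : (A i i - lam) * v i = -(∑ p ∈ Finset.univ.erase i, A i p * v p) := by
    have h0 : ∑ p, A i p * v p = A i i * v i + ∑ p ∈ Finset.univ.erase i, A i p * v p := by
      rw [← Finset.add_sum_erase _ _ (Finset.mem_univ i)]
    rw [h0] at hrow
    linarith
  have habs : (A i i - lam) * |v i| ≤ ∑ p ∈ Finset.univ.erase i, |A i p| * |v p| := by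
    calc (A i i - lam) * |v i|
        ≤ |A i i - lam| * |v i| :=
          mul_le_mul_of_nonneg_right (le_abs_self _) (abs_nonneg _)
      _ = |(A i i - lam) * v i| := (abs_mul _ _).symm
      _ = |∑ p ∈ Finset.univ.erase i, A i p * v p| := by rw [key, abs_neg]
      _ ≤ ∑ p ∈ Finset.univ.erase i, |A i p * v p| := Finset.abs_sum_le_sum_abs _ _
      _ = ∑ p ∈ Finset.univ.erase i, |A i p| * |v p| := by
          simp [abs_mul]
  have hsum : ∑ p ∈ Finset.univ.erase i, |A i p| * |v p|
      ≤ rT A S i * MS + rT A Sᶜ i * Mc := by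
    rw [hsplit, Finset.sum_union hdisj, rT, rT, Finset.sum_mul, Finset.sum_mul]
    have hA1 : ∑ p ∈ S.erase i, |A i p| * |v p| ≤ ∑ p ∈ S.erase i, |A i p| * MS :=
      Finset.sum_le_sum fun p hp =>
        mul_le_mul_of_nonneg_left (hMS p (Finset.mem_of_mem_erase hp)) (abs_nonneg _)
    have hA2 : ∑ p ∈ Sᶜ.erase i, |A i p| * |v p| ≤ ∑ p ∈ Sᶜ.erase i, |A i p| * Mc :=
      Finset.sum_le_sum fun p hp =>
        mul_le_mul_of_nonneg_left (hMc p (Finset.mem_of_mem_erase hp)) (abs_nonneg _)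
    rw [← Finset.sum_mul, ← Finset.sum_mul] at *
    linarith
  linarith

set_option maxHeartbeats 1000000 in
lemma key_lemma {n : ℕ} (A : Matrix (Fin n) (Fin n) ℝ)
    (hdiag : ∀ k, 0 ≤ A k k)
    (S : Finset (Fin n)) (hS : S.Nonempty) (hSc : Sᶜ.Nonempty)
    (h1 : ∀ i ∈ S, rT A S i ≤ A i i)
    (h2 : ∀ i ∈ Sᶜ, rT A Sᶜ i ≤ A i i)
    (h3 : ∀ i ∈ S, ∀ j ∈ Sᶜ,
      rT A Sᶜ i * rT A S j ≤ (A i i - rT A S i) * (A j j - rT A Sᶜ j) ∨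
      rT A S i + rT A Sᶜ i ≤ A i i)
    (h4 : ∀ i ∈ Sᶜ, ∀ j ∈ S,
      rT A S i * rT A Sᶜ j ≤ (A i i - rT A Sᶜ i) * (A j j - rT A S j) ∨
      rT A S i + rT A Sᶜ i ≤ A i i)
    (lam : ℝ) (hlam : lam < 0) (v : Fin n → ℝ) (hv : v ≠ 0)
    (heig : A.mulVec v = lam • v) : False := by
  obtain ⟨i, hiS, hi⟩ := S.exists_max_image (fun p => |v p|) hS
  obtain ⟨j, hjS, hj⟩ := Sᶜ.exists_max_image (fun p => |v p|) hSc
  have hri := row_ineq A S lam v heig i (|v i|) (|v j|) hi hj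
  have hrj := row_ineq A S lam v heig j (|v i|) (|v j|) hi hj
  obtain ⟨a, ha⟩ : ∃ a, a = |v i| := ⟨_, rfl⟩
  obtain ⟨b, hb⟩ : ∃ b, b = |v j| := ⟨_, rfl⟩
  obtain ⟨rS, hrS⟩ : ∃ x, x = rT A S i := ⟨_, rfl⟩
  obtain ⟨rc, hrc⟩ : ∃ x, x = rT A Sᶜ i := ⟨_, rfl⟩
  obtain ⟨sS, hsS⟩ : ∃ x, x = rT A S j := ⟨_, rfl⟩
  obtain ⟨sc, hsc⟩ : ∃ x, x = rT A Sᶜ j := ⟨_, rfl⟩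
  have hrc0 : 0 ≤ rc := by rw [hrc, rT]; exact Finset.sum_nonneg fun p _ => abs_nonneg _
  have hsS0 : 0 ≤ sS := by rw [hsS, rT]; exact Finset.sum_nonneg fun p _ => abs_nonneg _
  have hrS0 : 0 ≤ rS := by rw [hrS, rT]; exact Finset.sum_nonneg fun p _ => abs_nonneg _
  have hsc0 : 0 ≤ sc := by rw [hsc, rT]; exact Finset.sum_nonneg fun p _ => abs_nonneg _
  rw [← ha, ← hb, ← hrS, ← hrc] at hri
  rw [← ha, ← hb, ← hsS, ← hsc] at hrj
  have ha0 : 0 ≤ a := ha ▸ abs_nonneg _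
  have hb0 : 0 ≤ b := hb ▸ abs_nonneg _
  have hα : rS ≤ A i i := hrS ▸ h1 i hiS
  have hβ : sc ≤ A j j := hsc ▸ h2 j hjS
  have hri' : (A i i - rS - lam) * a ≤ rc * b := by nlinarith
  have hrj' : (A j j - sc - lam) * b ≤ sS * a := by nlinarith
  have hposa : 0 < A i i - rS - lam := by linarith
  have hposb : 0 < A j j - sc - lam := by linarith
  have hab : 0 < a ∨ 0 < b := by
    by_contra h
    push_neg at h
    apply hv
    funext p
    have hpa : |v i| = 0 := le_antisymm (ha ▸ h.1) (abs_nonneg _)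
    have hpb : |v j| = 0 := le_antisymm (hb ▸ h.2) (abs_nonneg _)
    by_cases hp : p ∈ S
    · have := hi p hp; rw [hpa] at this; exact abs_nonpos_iff.mp this
    · have := hj p (Finset.mem_compl.mpr hp); rw [hpb] at this
      exact abs_nonpos_iff.mp this
  have hna : (0:ℝ) ≤ -lam := by linarith
  have hapos : 0 < a := by
    rcases hab with h | h
    · exact h
    · by_contra ha'
      push_neg at ha'
      have haz : a = 0 := le_antisymm ha' ha0
      nlinarith [mul_pos hposb h]
  have hbpos : 0 < b := by
    by_contra hb'
    push_neg at hb'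
    have hbz : b = 0 := le_antisymm hb' hb0
    nlinarith [mul_pos hposa hapos]
  have hP : rc * sS ≤ (A i i - rS) * (A j j - sc) → False := by
    intro hp
    have hm : ((A i i - rS - lam) * a) * ((A j j - sc - lam) * b) ≤ (rc * b) * (sS * a) :=
      mul_le_mul hri' hrj' (le_of_lt (mul_pos hposb hbpos))
        (le_trans (le_of_lt (mul_pos hposa hapos)) hri')
    have h5 : ((A i i - rS - lam) * (A j j - sc - lam)) * (a * b) ≤ (rc * sS) * (a * b) := by
      nlinarith [hm]
    have h6 : (A i i - rS - lam) * (A j j - sc - lam) ≤ rc * sS :=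
      le_of_mul_le_mul_right (by nlinarith [h5]) (mul_pos hapos hbpos)
    nlinarith [h6, hp, mul_nonneg hna (by linarith : (0:ℝ) ≤ A i i - rS),
      mul_nonneg hna (by linarith : (0:ℝ) ≤ A j j - sc),
      mul_pos (by linarith : (0:ℝ) < -lam) (by linarith : (0:ℝ) < -lam)]
  rcases h3 i hiS j hjS with hp | hdi
  · exact hP (by rw [← hrc, ← hsS, ← hrS, ← hsc] at hp; exact hp)
  rcases h4 j hjS i hiS with hp | hdj
  · rw [← hrc, ← hsS, ← hrS, ← hsc] at hp
    exact hP (by nlinarith [hp])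
  rw [← hrS, ← hrc] at hdi
  rw [← hsS, ← hsc] at hdj
  rcases le_total b a with hba | hab'
  · nlinarith [hri, hri', mul_nonneg hrc0 (by linarith : (0:ℝ) ≤ a - b),
      mul_pos (by linarith : (0:ℝ) < -lam) hapos]
  · nlinarith [hrj, hrj', mul_nonneg hsS0 (by linarith : (0:ℝ) ≤ b - a),
      mul_pos (by linarith : (0:ℝ) < -lam) hbpos]

theorem stmt_18 {n : ℕ} (hn : 2 ≤ n) (A : Matrix (Fin n) (Fin n) ℝ) (hsym : A.IsSymm)
    (hdiag : ∀ k, 0 ≤ A k k)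
    (S : Finset (Fin n)) (hS : S.Nonempty) (hSc : Sᶜ.Nonempty)
    (h1 : ∀ i ∈ S, rT A S i ≤ A i i)
    (h2 : ∀ i ∈ Sᶜ, rT A Sᶜ i ≤ A i i)
    (h3 : ∀ i ∈ S, ∀ j ∈ Sᶜ,
      rT A Sᶜ i * rT A S j ≤ (A i i - rT A S i) * (A j j - rT A Sᶜ j) ∨
      rT A S i + rT A Sᶜ i ≤ A i i)
    (h4 : ∀ i ∈ Sᶜ, ∀ j ∈ S,
      rT A S i * rT A Sᶜ j ≤ (A i i - rT A Sᶜ i) * (A j j - rT A S j) ∨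
      rT A S i + rT A Sᶜ i ≤ A i i) :
    A.PosSemidef := by
  have hherm : A.IsHermitian := by
    rw [Matrix.IsHermitian, Matrix.conjTranspose]
    have hT : A.transpose = A := hsym
    rw [hT]; ext a b; simp
  apply hherm.posSemidef_iff_eigenvalues_nonneg.mpr
  intro k
  by_contra hneg
  push_neg at hneg
  exact key_lemma A hdiag S hS hSc h1 h2 h3 h4 (hherm.eigenvalues k) hneg
    (hherm.eigenvectorBasis k) (fun h => hherm.eigenvectorBasis.orthonormal.ne_zero k (by simpa using congrArg (WithLp.toLp 2) h))
    (hherm.mulVec_eigenvectorBasis k)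
end
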